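/- For ε > 0 define ψ1(ε, P_XY) = E_{Y ~ P_Y}[max{0, 1 − exp(ε)/exp(ℓ(Y))}], where ℓ(y) = log max_x P_{Y|X=x}(y)/P_Y(y) is the pointwise maximal leakage of outcome y. Then there exist finite random variables X, Y, Z forming a Markov chain X − Y − Z and an ε > 0 such that ψ1(ε, P_{Z|Y} ∘ P_XY) > ψ1(ε, P_XY); i.e., ψ1 is not closed under post-processing. Concretely, one may take X uniform on {1,2,3,4}, the mechanism P_{Y|X} with rows (0,0,0.5,0.5), (0,0,0.5,0.5), (0,0.2,0.4,0.4), (0.2,0,0.4,0.4), Z = h(Y) with h mapping {1,3} to 1 and {2,4} to 2, and ε = log(10/9), in which case ψ1(ε, P_XY) = 13/180 < 2/27 = ψ1(ε, P_XZ). -/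

import Mathlib

open Real Finset
open scoped Classical

noncomputable section

/-- Marginal distribution of the first coordinate of a joint distribution. -/
def margX {X Y : Type} [Fintype Y] (P : X → Y → ℝ) (x : X) : ℝ := ∑ y, P x y

/-- Marginal distribution of the second coordinate of a joint distribution. -/
def margY {X Y : Type} [Fintype X] (P : X → Y → ℝ) (y : Y) : ℝ := ∑ x, P x y

/-- `P` is a joint probability distribution on `X × Y`. -/
def IsJoint {X Y : Type} [Fintype X] [Fintype Y] (P : X → Y → ℝ) : Prop :=
  (∀ x y, 0 ≤ P x y) ∧ (∑ x, ∑ y, P x y) = 1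

/-- Conditional probability `P_{Y|X=x}(y)` of the second coordinate given the first. -/
def condYX {X Y : Type} [Fintype Y] (P : X → Y → ℝ) (x : X) (y : Y) : ℝ :=
  P x y / margX P x

/-- Information density `i(x;y) = log (P_{XY}(x,y) / (P_X(x) P_Y(y)))`. -/
def infoDen {X Y : Type} [Fintype X] [Fintype Y] (P : X → Y → ℝ) (x : X) (y : Y) : ℝ :=
  Real.log (P x y / (margX P x * margY P y))

/-- `ψ₂(ε, P_XY) = max_x E_{Y ~ P_{Y|X=x}}[max {0, 1 - e^ε / e^{i(x;Y)}}]`. -/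
def psi2 {X Y : Type} [Fintype X] [Fintype Y] (P : X → Y → ℝ) (ε : ℝ) : ℝ :=
  ⨆ x, ∑ y, condYX P x y * max 0 (1 - Real.exp ε / Real.exp (infoDen P x y))

/-- `K` is a Markov kernel (a conditional distribution). -/
def IsKernel {Y Z : Type} [Fintype Z] (K : Y → Z → ℝ) : Prop :=
  (∀ y z, 0 ≤ K y z) ∧ ∀ y, (∑ z, K y z) = 1

/-- Joint distribution of `(X, Z)` obtained by post-processing `Y` with the kernel `K`
(marginalizing out `Y`); this encodes the Markov chain `X - Y - Z`. -/
def pushKernel {X Y Z : Type} [Fintype Y] (P : X → Y → ℝ) (K : Y → Z → ℝ)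
    (x : X) (z : Z) : ℝ :=
  ∑ y, P x y * K y z

/-- Pointwise maximal leakage of the outcome `y`:
`ℓ(X → y) = log (max_x P_{Y|X=x}(y) / P_Y(y))`. -/
def pml {X Y : Type} [Fintype X] [Fintype Y] (P : X → Y → ℝ) (y : Y) : ℝ :=
  Real.log ((⨆ x, condYX P x y) / margY P y)

/-- `ψ₁(ε, P_XY) = E_{Y ~ P_Y}[max {0, 1 - e^ε / e^{ℓ(Y)}}]`. -/
def psi1 {X Y : Type} [Fintype X] [Fintype Y] (P : X → Y → ℝ) (ε : ℝ) : ℝ :=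
  ∑ y, margY P y * max 0 (1 - Real.exp ε / Real.exp (pml P y))

/-- The mechanism `P_{Y|X}` of the counterexample, with rows
`(0,0,0.5,0.5), (0,0,0.5,0.5), (0,0.2,0.4,0.4), (0.2,0,0.4,0.4)`. -/
def mech4 : Fin 4 → Fin 4 → ℝ :=
  ![![0, 0, 0.5, 0.5], ![0, 0, 0.5, 0.5], ![0, 0.2, 0.4, 0.4], ![0.2, 0, 0.4, 0.4]]

/-- The joint distribution of `(X, Y)` with `X` uniform on a four-element set and the
mechanism `mech4`. -/
def PXY4 : Fin 4 → Fin 4 → ℝ := fun x y => (1 / 4 : ℝ) * mech4 x y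

/-- The deterministic post-processing `Z = h(Y)` with `h` mapping `{1,3}` to `1` and
`{2,4}` to `2` (here in `0`-indexed form), written as a kernel. -/
def postK : Fin 4 → Fin 2 → ℝ := ![![1, 0], ![0, 1], ![1, 0], ![0, 1]]

/-- `ψ₁` is not closed under post-processing: for `X` uniform on a
four-element set, the mechanism `mech4`, the post-processing kernel `postK`, and
`ε = log (10/9)`, one has `ψ₁(ε, P_XY) = 13/180 < 2/27 = ψ₁(ε, P_XZ)`. -/


lemma fin4_csup (f : Fin 4 → ℝ) (i : Fin 4) (h : ∀ x, f x ≤ f i) : (⨆ x, f x) = f i :=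
  le_antisymm (ciSup_le h) (le_ciSup (Set.finite_range f).bddAbove i)

lemma margX_PXY4 (x : Fin 4) : margX PXY4 x = 1 / 4 := by
  fin_cases x <;>
    norm_num [margX, PXY4, mech4, Fin.sum_univ_four, Matrix.cons_val_two, Matrix.cons_val_three, Matrix.vecHead, Matrix.vecTail]

lemma condYX_PXY4 (x y : Fin 4) : condYX PXY4 x y = mech4 x y := by
  rw [condYX, margX_PXY4, PXY4]; ring

lemma margY_PXY4_0 : margY PXY4 0 = 1 / 20 := by
  norm_num [margY, PXY4, mech4, Fin.sum_univ_four, Matrix.cons_val_two, Matrix.cons_val_three, Matrix.vecHead, Matrix.vecTail]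
lemma margY_PXY4_1 : margY PXY4 1 = 1 / 20 := by
  norm_num [margY, PXY4, mech4, Fin.sum_univ_four, Matrix.cons_val_two, Matrix.cons_val_three, Matrix.vecHead, Matrix.vecTail]
lemma margY_PXY4_2 : margY PXY4 2 = 9 / 20 := by
  norm_num [margY, PXY4, mech4, Fin.sum_univ_four, Matrix.cons_val_two, Matrix.cons_val_three, Matrix.vecHead, Matrix.vecTail]
lemma margY_PXY4_3 : margY PXY4 3 = 9 / 20 := by
  norm_num [margY, PXY4, mech4, Fin.sum_univ_four, Matrix.cons_val_two, Matrix.cons_val_three, Matrix.vecHead, Matrix.vecTail]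

lemma sup_PXY4_0 : (⨆ x, condYX PXY4 x 0) = 1 / 5 := by
  have h : ∀ x, condYX PXY4 x 0 ≤ condYX PXY4 3 0 := by
    intro x; fin_cases x <;>
      norm_num [condYX_PXY4, mech4, Matrix.cons_val_two, Matrix.cons_val_three, Matrix.vecHead, Matrix.vecTail]
  rw [fin4_csup _ 3 h, condYX_PXY4]
  norm_num [mech4, Matrix.cons_val_two, Matrix.cons_val_three, Matrix.vecHead, Matrix.vecTail]
lemma sup_PXY4_1 : (⨆ x, condYX PXY4 x 1) = 1 / 5 := by
  have h : ∀ x, condYX PXY4 x 1 ≤ condYX PXY4 2 1 := by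
    intro x; fin_cases x <;>
      norm_num [condYX_PXY4, mech4, Matrix.cons_val_two, Matrix.cons_val_three, Matrix.vecHead, Matrix.vecTail]
  rw [fin4_csup _ 2 h, condYX_PXY4]
  norm_num [mech4, Matrix.cons_val_two, Matrix.cons_val_three, Matrix.vecHead, Matrix.vecTail]
lemma sup_PXY4_2 : (⨆ x, condYX PXY4 x 2) = 1 / 2 := by
  have h : ∀ x, condYX PXY4 x 2 ≤ condYX PXY4 0 2 := by
    intro x; fin_cases x <;>
      norm_num [condYX_PXY4, mech4, Matrix.cons_val_two, Matrix.cons_val_three, Matrix.vecHead, Matrix.vecTail]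
  rw [fin4_csup _ 0 h, condYX_PXY4]
  norm_num [mech4, Matrix.cons_val_two, Matrix.cons_val_three, Matrix.vecHead, Matrix.vecTail]
lemma sup_PXY4_3 : (⨆ x, condYX PXY4 x 3) = 1 / 2 := by
  have h : ∀ x, condYX PXY4 x 3 ≤ condYX PXY4 0 3 := by
    intro x; fin_cases x <;>
      norm_num [condYX_PXY4, mech4, Matrix.cons_val_two, Matrix.cons_val_three, Matrix.vecHead, Matrix.vecTail]
  rw [fin4_csup _ 0 h, condYX_PXY4]
  norm_num [mech4, Matrix.cons_val_two, Matrix.cons_val_three, Matrix.vecHead, Matrix.vecTail]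

def Q : Fin 4 → Fin 2 → ℝ := pushKernel PXY4 postK

lemma Q_val : Q = ![![1/8, 1/8], ![1/8, 1/8], ![1/10, 3/20], ![3/20, 1/10]] := by
  funext x z
  fin_cases x <;> fin_cases z <;>
    norm_num [Q, pushKernel, PXY4, mech4, postK, Fin.sum_univ_four,
      Matrix.cons_val_two, Matrix.cons_val_three, Matrix.vecHead, Matrix.vecTail]

lemma margX_Q (x : Fin 4) : margX Q x = 1 / 4 := by
  rw [Q_val]; fin_cases x <;>
    norm_num [margX, Fin.sum_univ_two, Matrix.cons_val_two, Matrix.cons_val_three, Matrix.vecHead, Matrix.vecTail]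

lemma margY_Q (z : Fin 2) : margY Q z = 1 / 2 := by
  rw [Q_val]; fin_cases z <;>
    norm_num [margY, Fin.sum_univ_four, Matrix.cons_val_two, Matrix.cons_val_three, Matrix.vecHead, Matrix.vecTail]

lemma condYX_Q (x : Fin 4) (z : Fin 2) : condYX Q x z = 4 * Q x z := by
  rw [condYX, margX_Q]; ring

lemma sup_Q_0 : (⨆ x, condYX Q x 0) = 3 / 5 := by
  have h : ∀ x, condYX Q x 0 ≤ condYX Q 3 0 := by
    intro x
    rw [condYX_Q, condYX_Q, Q_val]
    fin_cases x <;> norm_num [Matrix.cons_val_two, Matrix.cons_val_three, Matrix.vecHead, Matrix.vecTail]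
  rw [fin4_csup _ 3 h, condYX_Q, Q_val]
  norm_num [Matrix.cons_val_two, Matrix.cons_val_three, Matrix.vecHead, Matrix.vecTail]

lemma sup_Q_1 : (⨆ x, condYX Q x 1) = 3 / 5 := by
  have h : ∀ x, condYX Q x 1 ≤ condYX Q 2 1 := by
    intro x
    rw [condYX_Q, condYX_Q, Q_val]
    fin_cases x <;> norm_num [Matrix.cons_val_two, Matrix.cons_val_three, Matrix.vecHead, Matrix.vecTail]
  rw [fin4_csup _ 2 h, condYX_Q, Q_val]
  norm_num [Matrix.cons_val_two, Matrix.cons_val_three, Matrix.vecHead, Matrix.vecTail]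

theorem psi1_not_closed_under_post_processing :
    IsJoint PXY4 ∧ IsKernel postK ∧ (0 : ℝ) < Real.log (10 / 9) ∧
    psi1 PXY4 (Real.log (10 / 9)) = 13 / 180 ∧
    psi1 (pushKernel PXY4 postK) (Real.log (10 / 9)) = 2 / 27 ∧
    psi1 PXY4 (Real.log (10 / 9)) < psi1 (pushKernel PXY4 postK) (Real.log (10 / 9)) := by
  have hlog : (0 : ℝ) < Real.log (10 / 9) := Real.log_pos (by norm_num)
  have h1 : psi1 PXY4 (Real.log (10 / 9)) = 13 / 180 := by
    rw [psi1, Fin.sum_univ_four, pml, pml, pml, pml,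
      sup_PXY4_0, sup_PXY4_1, sup_PXY4_2, sup_PXY4_3,
      margY_PXY4_0, margY_PXY4_1, margY_PXY4_2, margY_PXY4_3]
    rw [show ((1:ℝ)/5) / (1/20) = 4 by norm_num,
      show ((1:ℝ)/2) / (9/20) = 10/9 by norm_num,
      Real.exp_log (by norm_num : (0:ℝ) < 10/9),
      Real.exp_log (by norm_num : (0:ℝ) < 4),
      max_eq_right (by norm_num : (0:ℝ) ≤ 1 - (10/9) / 4),
      max_eq_left (by norm_num : 1 - (10:ℝ)/9 / (10/9) ≤ 0)]
    norm_num
  have h2 : psi1 (pushKernel PXY4 postK) (Real.log (10 / 9)) = 2 / 27 := by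
    show psi1 Q _ = _
    rw [psi1, Fin.sum_univ_two, pml, pml, sup_Q_0, sup_Q_1, margY_Q, margY_Q]
    rw [show ((3:ℝ)/5) / (1/2) = 6/5 by norm_num,
      Real.exp_log (by norm_num : (0:ℝ) < 10/9),
      Real.exp_log (by norm_num : (0:ℝ) < 6/5),
      max_eq_right (by norm_num : (0:ℝ) ≤ 1 - (10/9) / (6/5))]
    norm_num
  refine ⟨⟨?_, ?_⟩, ⟨?_, ?_⟩, hlog, h1, h2, by rw [h1, h2]; norm_num⟩
  · intro x y; fin_cases x <;> fin_cases y <;>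
      norm_num [PXY4, mech4, Matrix.cons_val_two, Matrix.cons_val_three, Matrix.vecHead, Matrix.vecTail]
  · norm_num [PXY4, mech4, Fin.sum_univ_four, Matrix.cons_val_two, Matrix.cons_val_three, Matrix.vecHead, Matrix.vecTail]
  · intro y z; fin_cases y <;> fin_cases z <;>
      norm_num [postK, Matrix.cons_val_two, Matrix.cons_val_three, Matrix.vecHead, Matrix.vecTail]
  · intro y; fin_cases y <;>
      norm_num [postK, Fin.sum_univ_two, Matrix.cons_val_two, Matrix.cons_val_three, Matrix.vecHead, Matrix.vecTail]
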